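/- If a connected graph G on n ≥ 2 vertices has exactly one universal vertex, then mdim(G) = n − 1. -/

import Mathlib

open SimpleGraph

variable {V : Type*}

/-- Distance from a vertex `w` to an (unordered) edge `e`:
the minimum of the distances to the two endpoints. -/
noncomputable def edgeVertexDist (G : SimpleGraph V) (w : V) (e : Sym2 V) : ℕ :=
  Sym2.lift ⟨fun a b => min (G.dist a w) (G.dist b w), fun a b => by simp [min_comm]⟩ e

/-- Distance from a vertex `w` to a mixed element (vertex or edge). -/
noncomputable def mixedDist (G : SimpleGraph V) (w : V) : V ⊕ G.edgeSet → ℕ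
  | Sum.inl v => G.dist v w
  | Sum.inr e => edgeVertexDist G w e.val

/-- `W` is a mixed resolving set: every two distinct mixed elements are
distinguished by the distance to some vertex of `W`. -/
def IsMixedResolving (G : SimpleGraph V) (W : Set V) : Prop :=
  ∀ x y : V ⊕ G.edgeSet, x ≠ y → ∃ w ∈ W, mixedDist G w x ≠ mixedDist G w y

/-- The mixed metric dimension of a finite graph. -/
noncomputable def mdim [Fintype V] (G : SimpleGraph V) : ℕ :=
  sInf {n | ∃ W : Finset V, W.card = n ∧ IsMixedResolving G ↑W}

/-- `y` is a maximal neighbor of `x`: `y` is a neighbor of `x` adjacent to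
every neighbor of `x` other than `y` itself. -/
def IsMaxNeighbor (G : SimpleGraph V) (x y : V) : Prop :=
  G.Adj x y ∧ ∀ z, G.Adj x z → z ≠ y → G.Adj y z

lemma edgeVertexDist_mk (G : SimpleGraph V) (w a b : V) :
    edgeVertexDist G w s(a, b) = min (G.dist a w) (G.dist b w) := rfl

/-- A connected graph on `n ≥ 2` vertices with exactly one universal vertex
has `mdim G = n - 1`. -/
theorem stmt_9 [Fintype V] (G : SimpleGraph V) (hG : G.Connected)
    (hn : 2 ≤ Fintype.card V)
    (huniq : ∃! x : V, ∀ z : V, z ≠ x → G.Adj x z) :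
    mdim G = Fintype.card V - 1 := by
  classical
  obtain ⟨u, hu, huni⟩ := huniq
  have hpos : ∀ {p q : V}, p ≠ q → 0 < G.dist p q := fun h => hG.pos_dist_of_ne h
  have hzero : ∀ {p q : V}, G.dist p q = 0 ↔ p = q := fun {p q} => hG.dist_eq_zero_iff
  have hdu : ∀ {w : V}, w ≠ u → G.dist u w = 1 := fun {w} hw =>
    SimpleGraph.dist_eq_one_iff_adj.mpr (hu w hw)
  have hdle : ∀ p q : V, G.dist p q ≤ 2 := by
    intro p q
    rcases eq_or_ne p q with h | hpq
    · rw [h, SimpleGraph.dist_self]; omega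
    rcases eq_or_ne p u with h | hp
    · rw [h, hdu (fun hq => hpq (h.trans hq.symm))]; omega
    rcases eq_or_ne q u with h | hq
    · rw [h, SimpleGraph.dist_comm (u := p) (v := u), hdu hp]; omega
    calc G.dist p q ≤ G.dist p u + G.dist u q := hG.dist_triangle
      _ ≤ 2 := by
          rw [SimpleGraph.dist_comm (u := p) (v := u), hdu hp, hdu hq]
  -- distance 2 for distinct non-adjacent vertices
  have hd2 : ∀ {p q : V}, p ≠ q → ¬ G.Adj p q → G.dist p q = 2 := by
    intro p q hne hadj
    have h1 : G.dist p q ≠ 1 := fun h => hadj (SimpleGraph.dist_eq_one_iff_adj.mp h)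
    have h0 : G.dist p q ≠ 0 := fun h => hne (hzero.mp h)
    have := hdle p q
    omega
  -- every vertex other than u has a non-neighbor
  have hnonnbr : ∀ x : V, x ≠ u → ∃ z, z ≠ x ∧ ¬ G.Adj x z := by
    intro x hx
    by_contra h
    push_neg at h
    exact hx (huni x (fun z hz => h z hz))
  -- distance from a vertex to an edge containing it is 0
  have hev0 : ∀ (w : V) (e : Sym2 V), w ∈ e → edgeVertexDist G w e = 0 := by
    intro w e hw
    induction e using Sym2.ind with
    | _ a b =>
      rw [Sym2.mem_iff] at hw
      rcases hw with rfl | rfl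
      · simp [edgeVertexDist_mk]
      · simp [edgeVertexDist_mk]
  have hevpos : ∀ (w : V) (e : Sym2 V), w ∉ e → 0 < edgeVertexDist G w e := by
    intro w e hw
    induction e using Sym2.ind with
    | _ a b =>
      rw [Sym2.mem_iff] at hw
      push_neg at hw
      rw [edgeVertexDist_mk]
      exact lt_min (hpos hw.1.symm) (hpos hw.2.symm)
  -- key: vertex vs edge always distinguished by some w ≠ u
  have key : ∀ (a : V) (e : G.edgeSet), ∃ w, w ≠ u ∧
      mixedDist G w (Sum.inl a) ≠ mixedDist G w (Sum.inr e) := by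
    rintro a ⟨e, he⟩
    induction e using Sym2.ind with
    | _ b c =>
      have hadj : G.Adj b c := he
      have hbc : b ≠ c := hadj.ne
      by_cases hae : a ∈ s(b, c)
      · -- a is an endpoint; wlog via cases
        rw [Sym2.mem_iff] at hae
        have main : ∀ c' : V, G.Adj a c' → s(b,c) = s(a,c') → ∃ w, w ≠ u ∧
            mixedDist G w (Sum.inl a) ≠ mixedDist G w (Sum.inr ⟨s(b,c), he⟩) := by
          intro c' hac hrw
          have hac' : a ≠ c' := hac.ne
          rcases eq_or_ne c' u with h | hcu
          · -- c' = u : use a non-neighbor of a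
            have hau : a ≠ u := fun h' => hac' (h'.trans h.symm)
            obtain ⟨z, hza, hnadj⟩ := hnonnbr a hau
            have hzu : z ≠ u := fun h' => hnadj (by rw [h', ← h]; exact hac)
            refine ⟨z, hzu, ?_⟩
            show G.dist a z ≠ edgeVertexDist G z s(b,c)
            rw [hrw, edgeVertexDist_mk, hd2 (Ne.symm hza) hnadj, h, hdu hzu]
            omega
          · refine ⟨c', hcu, ?_⟩
            show G.dist a c' ≠ edgeVertexDist G c' s(b,c)
            rw [hev0 c' s(b,c) (by rw [hrw]; simp)]
            exact (hpos hac').ne'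
        rcases hae with rfl | rfl
        · exact main c hadj rfl
        · exact main b hadj.symm Sym2.eq_swap
      · -- a is not an endpoint
        rcases eq_or_ne a u with h | hau
        · -- a = u : use b
          have hbu : b ≠ u := fun hb => hae (by rw [h, ← hb]; simp)
          refine ⟨b, hbu, ?_⟩
          show G.dist a b ≠ edgeVertexDist G b s(b,c)
          rw [h, hdu hbu, hev0 b s(b,c) (by simp)]
          omega
        · refine ⟨a, hau, ?_⟩
          show G.dist a a ≠ edgeVertexDist G a s(b,c)
          rw [SimpleGraph.dist_self]
          exact (hevpos a s(b,c) hae).ne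
  -- the candidate resolving set
  set W₀ : Finset V := Finset.univ.erase u with hW₀
  have hW₀card : W₀.card = Fintype.card V - 1 := by
    rw [hW₀, Finset.card_erase_of_mem (Finset.mem_univ u), Finset.card_univ]
  have hmemW₀ : ∀ w : V, w ∈ W₀ ↔ w ≠ u := by
    intro w; simp [hW₀]
  have hres : IsMixedResolving G ↑W₀ := by
    rintro (a | e) (b | f) hxy
    · -- vertex vs vertex
      have hab : a ≠ b := fun h => hxy (by rw [h])
      rcases eq_or_ne a u with h | hau
      · have hbu : b ≠ u := fun hb => hab (h.trans hb.symm)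
        refine ⟨b, Finset.mem_coe.mpr ((hmemW₀ b).mpr hbu), ?_⟩
        show G.dist a b ≠ G.dist b b
        rw [h, hdu hbu, SimpleGraph.dist_self]
        omega
      · refine ⟨a, Finset.mem_coe.mpr ((hmemW₀ a).mpr hau), ?_⟩
        show G.dist a a ≠ G.dist b a
        rw [SimpleGraph.dist_self]
        exact (hpos hab.symm).ne
    · obtain ⟨w, hwu, hw⟩ := key a f
      exact ⟨w, Finset.mem_coe.mpr ((hmemW₀ w).mpr hwu), hw⟩
    · obtain ⟨w, hwu, hw⟩ := key b e
      exact ⟨w, Finset.mem_coe.mpr ((hmemW₀ w).mpr hwu), fun h => hw h.symm⟩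
    · -- edge vs edge
      obtain ⟨e, he⟩ := e
      obtain ⟨f, hf⟩ := f
      have hef : e ≠ f := fun h => hxy (by simp [h])
      have hx : ∃ x, x ∈ e ∧ x ∉ f := by
        induction e using Sym2.ind with
        | _ a b =>
          by_contra h
          push_neg at h
          have hab : a ≠ b := (G.mem_edgeSet.mp he).ne
          exact hef (((Sym2.mem_and_mem_iff hab).mp
            ⟨h a (by simp), h b (by simp)⟩).symm)
      have hy : ∃ y, y ∈ f ∧ y ∉ e := by
        induction f using Sym2.ind with
        | _ a b =>
          by_contra h
          push_neg at h
          have hab : a ≠ b := (G.mem_edgeSet.mp hf).ne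
          exact hef ((Sym2.mem_and_mem_iff hab).mp ⟨h a (by simp), h b (by simp)⟩)
      obtain ⟨x, hxe, hxf⟩ := hx
      obtain ⟨y, hyf, hye⟩ := hy
      rcases eq_or_ne x u with h | hxu
      · have hyu : y ≠ u := fun h' => hye (by rw [h', ← h]; exact hxe)
        refine ⟨y, Finset.mem_coe.mpr ((hmemW₀ y).mpr hyu), ?_⟩
        show edgeVertexDist G y e ≠ edgeVertexDist G y f
        rw [hev0 y f hyf]
        exact (hevpos y e hye).ne'
      · refine ⟨x, Finset.mem_coe.mpr ((hmemW₀ x).mpr hxu), ?_⟩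
        show edgeVertexDist G x e ≠ edgeVertexDist G x f
        rw [hev0 x e hxe]
        exact (hevpos x f hxf).ne
  -- lower bound: every resolving set contains all vertices ≠ u
  have hlb : ∀ (W : Finset V), IsMixedResolving G ↑W → ∀ x : V, x ≠ u → x ∈ W := by
    intro W hW x hx
    have hadj : G.Adj u x := hu x hx
    obtain ⟨w, hwW, hw⟩ := hW (Sum.inl u) (Sum.inr ⟨s(u, x), G.mem_edgeSet.mpr hadj⟩)
      Sum.inl_ne_inr
    have hwx : w = x := by
      by_contra hwx
      apply hw
      show G.dist u w = edgeVertexDist G w s(u, x)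
      rw [edgeVertexDist_mk]
      have : G.dist u w ≤ G.dist x w := by
        rcases eq_or_ne w u with h | hwu
        · rw [h, SimpleGraph.dist_self]; omega
        · rw [hdu hwu]
          exact hpos (Ne.symm hwx)
      omega
    exact hwx ▸ (Finset.mem_coe.mp hwW)
  -- conclude
  have hlb' : ∀ n ∈ {n | ∃ W : Finset V, W.card = n ∧ IsMixedResolving G ↑W},
      Fintype.card V - 1 ≤ n := by
    rintro n ⟨W, rfl, hW⟩
    calc Fintype.card V - 1 = W₀.card := hW₀card.symm
      _ ≤ W.card := Finset.card_le_card (fun x hx => hlb W hW x ((hmemW₀ x).mp hx))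
  have hmem : Fintype.card V - 1 ∈
      {n | ∃ W : Finset V, W.card = n ∧ IsMixedResolving G ↑W} :=
    ⟨W₀, hW₀card, hres⟩
  exact le_antisymm (Nat.sInf_le hmem) (le_csInf ⟨_, hmem⟩ hlb')
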